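/- Let F(s,t,u) ∈ ℚ[[s,t,u]] have coefficients c_{i,j,k} and suppose a linear differential operator P(x, d/dx) with polynomial coefficients and rational functions S, T ∈ ℚ(x,s,t) satisfy P(G) = ∂S/∂s + ∂T/∂t, where G(s,t,x) = (1/(st))·F(s, t/s, x/t) viewed in the module of formal sums Σ c_{α,β,γ} s^α t^β x^γ over α ∈ ℕ, β,γ ∈ ℤ with α+β ≥ −μ, β+γ ≥ −ν. Then P annihilates the diagonal Diag(F)(x) = Σ_{n≥0} c_{n,n,n} x^n. -/

import Mathlib

/-!  Lipshitz's lemma.  We model formal sums `Σ c_{α,β,γ} s^α t^β x^γ`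
(`α, β, γ ∈ ℤ`) by their coefficient functions `ℤ × ℤ × ℤ → ℚ`. -/

/-- The support condition defining Lipshitz's module of formal sums:
there are `μ, ν ∈ ℕ` with `α + β ≥ −μ` and `β + γ ≥ −ν` on the support. -/
def InLipshitzModule (c : ℤ × ℤ × ℤ → ℚ) : Prop :=
  ∃ μ ν : ℕ, ∀ α β γ : ℤ, c (α, β, γ) ≠ 0 → -(μ : ℤ) ≤ α + β ∧ -(ν : ℤ) ≤ β + γ

/-- Partial derivative `∂/∂s` on coefficient functions. -/
def pdS (c : ℤ × ℤ × ℤ → ℚ) : ℤ × ℤ × ℤ → ℚ :=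
  fun z => ((z.1 + 1 : ℤ) : ℚ) * c (z.1 + 1, z.2.1, z.2.2)

/-- Partial derivative `∂/∂t` on coefficient functions. -/
def pdT (c : ℤ × ℤ × ℤ → ℚ) : ℤ × ℤ × ℤ → ℚ :=
  fun z => ((z.2.1 + 1 : ℤ) : ℚ) * c (z.1, z.2.1 + 1, z.2.2)

/-- Partial derivative `∂/∂x` on coefficient functions. -/
def pdX (c : ℤ × ℤ × ℤ → ℚ) : ℤ × ℤ × ℤ → ℚ :=
  fun z => ((z.2.2 + 1 : ℤ) : ℚ) * c (z.1, z.2.1, z.2.2 + 1)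

/-- Multiplication by a polynomial in `x` on coefficient functions. -/
noncomputable def polyMulX (q : Polynomial ℚ) (c : ℤ × ℤ × ℤ → ℚ) : ℤ × ℤ × ℤ → ℚ :=
  fun z => ∑ k ∈ Finset.range (q.natDegree + 1), q.coeff k * c (z.1, z.2.1, z.2.2 - (k : ℤ))

/-- The action of the operator `P = Σ_{i≤r} p_i(x) ∂ₓ^i` on coefficient functions. -/
noncomputable def applyOp (r : ℕ) (p : ℕ → Polynomial ℚ) (c : ℤ × ℤ × ℤ → ℚ) :
    ℤ × ℤ × ℤ → ℚ :=
  fun z => ∑ i ∈ Finset.range (r + 1), polyMulX (p i) (pdX^[i] c) z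

/-- The coefficient function of `G = (1/(st))·F(s, t/s, x/t)`, where `c i j k` are
the coefficients of `F`: the coefficient of `s^α t^β x^γ` is `c_{i,j,k}` with
`k = γ`, `j = β + γ + 1`, `i = α + β + γ + 2`. -/
def Gof (c : ℕ → ℕ → ℕ → ℚ) : ℤ × ℤ × ℤ → ℚ := fun z =>
  if 0 ≤ z.2.2 ∧ 0 ≤ z.2.1 + z.2.2 + 1 ∧ 0 ≤ z.1 + z.2.1 + z.2.2 + 2 then
    c (z.1 + z.2.1 + z.2.2 + 2).toNat (z.2.1 + z.2.2 + 1).toNat z.2.2.toNat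
  else 0

/-- **Lipshitz's lemma.**  If `P(G) = ∂S/∂s + ∂T/∂t` for some nonzero operator
`P(x, d/dx)` with polynomial coefficients and elements `S, T` of the module of
formal sums (e.g. expansions of rational functions), then `P` annihilates the
diagonal `Diag(F) = Σ c_{n,n,n} xⁿ`. -/
def d1 (g : ℤ → ℚ) : ℤ → ℚ := fun γ => ((γ + 1 : ℤ) : ℚ) * g (γ + 1)

noncomputable def extc (f : PowerSeries ℚ) : ℤ → ℚ :=
  fun γ => if 0 ≤ γ then PowerSeries.coeff γ.toNat f else 0

lemma extc_derivativeFun (f : PowerSeries ℚ) : extc f.derivativeFun = d1 (extc f) := by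
  funext γ
  simp only [extc, d1]
  rcases lt_trichotomy γ (-1) with h | h | h
  · rw [if_neg (by omega), if_neg (by omega), mul_zero]
  · subst h; norm_num
  · have h0 : (0:ℤ) ≤ γ := by omega
    rw [if_pos h0, if_pos (by omega), show f.derivativeFun = PowerSeries.derivative ℚ f from rfl, PowerSeries.coeff_derivative]
    have : (γ + 1).toNat = γ.toNat + 1 := by omega
    rw [this]
    have hg : ((γ.toNat : ℚ)) = (γ : ℚ) := by
      exact_mod_cast congrArg (fun x : ℤ => (x : ℚ)) (Int.toNat_of_nonneg h0)
    push_cast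
    rw [hg]
    ring

lemma extc_iter_deriv (f : PowerSeries ℚ) (i : ℕ) :
    extc (PowerSeries.derivativeFun^[i] f) = d1^[i] (extc f) := by
  induction i with
  | zero => rfl
  | succ n ih =>
    rw [Function.iterate_succ_apply', Function.iterate_succ_apply',
      extc_derivativeFun, ih]

lemma pdX_iter (C : ℤ × ℤ × ℤ → ℚ) (i : ℕ) (α β γ : ℤ) :
    pdX^[i] C (α, β, γ) = d1^[i] (fun γ => C (α, β, γ)) γ := by
  induction i generalizing γ with
  | zero => rfl
  | succ n ih =>
    rw [Function.iterate_succ_apply', Function.iterate_succ_apply']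
    show ((γ + 1 : ℤ) : ℚ) * pdX^[n] C (α, β, γ + 1) = d1 (d1^[n] fun γ => C (α, β, γ)) γ
    rw [ih]; rfl

lemma coeff_poly_mul (q : Polynomial ℚ) (f : PowerSeries ℚ) (n : ℕ) :
    PowerSeries.coeff n ((q : PowerSeries ℚ) * f) =
      ∑ k ∈ Finset.range (q.natDegree + 1), q.coeff k * extc f ((n : ℤ) - k) := by
  have key : ∀ m : ℕ, m ≤ n + q.natDegree + 1 →
      (∀ k, m ≤ k → k < n + q.natDegree + 1 → q.coeff k * extc f ((n:ℤ) - k) = 0) →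
      ∑ k ∈ Finset.range m, q.coeff k * extc f ((n:ℤ) - k)
        = ∑ k ∈ Finset.range (n + q.natDegree + 1), q.coeff k * extc f ((n:ℤ) - k) := by
    intro m hm hv
    refine Finset.sum_subset (Finset.range_subset_range.2 hm) ?_
    intro k hk hk'
    simp only [Finset.mem_range] at hk hk'
    exact hv k (by omega) hk
  rw [PowerSeries.coeff_mul, Finset.Nat.sum_antidiagonal_eq_sum_range_succ_mk]
  have step : ∀ k ∈ Finset.range (n + 1),
      PowerSeries.coeff k (q : PowerSeries ℚ) * PowerSeries.coeff (n - k) f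
        = q.coeff k * extc f ((n : ℤ) - k) := by
    intro k hk
    simp only [Finset.mem_range, Nat.lt_succ_iff] at hk
    rw [Polynomial.coeff_coe]
    congr 1
    simp only [extc]
    rw [if_pos (by omega), show ((n:ℤ) - (k:ℤ)).toNat = n - k from by omega]
  rw [Finset.sum_congr rfl step,
    key (n + 1) (by omega) (fun k hk _ => by
      simp only [extc]
      rw [if_neg (by omega), mul_zero]),
    ← key (q.natDegree + 1) (by omega) (fun k hk _ => by
      rw [Polynomial.coeff_eq_zero_of_natDegree_lt (by omega), zero_mul])]

lemma extc_diag (c : ℕ → ℕ → ℕ → ℚ) :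
    extc (PowerSeries.mk fun n => c n n n) = fun γ => Gof c (-1, -1, γ) := by
  funext γ
  simp only [extc, Gof, PowerSeries.coeff_mk]
  by_cases h : 0 ≤ γ
  · rw [if_pos h, if_pos ⟨h, by omega, by omega⟩]
    have e1 : ((-1 : ℤ) + -1 + γ + 2).toNat = γ.toNat := by omega
    have e2 : ((-1 : ℤ) + γ + 1).toNat = γ.toNat := by omega
    simp [e1, e2]
  · rw [if_neg h, if_neg (by push_neg; intro h1; omega)]


theorem lipshitz_lemma (c : ℕ → ℕ → ℕ → ℚ) (r : ℕ) (p : ℕ → Polynomial ℚ)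
    (S T : ℤ × ℤ × ℤ → ℚ)
    (hP : ∃ i ≤ r, p i ≠ 0)
    (hS : InLipshitzModule S) (hT : InLipshitzModule T)
    (heq : applyOp r p (Gof c) = fun z => pdS S z + pdT T z) :
    ∑ i ∈ Finset.range (r + 1),
        (p i : PowerSeries ℚ) *
          (PowerSeries.derivativeFun^[i] (PowerSeries.mk fun n => c n n n)) = 0 := by
  ext n
  rw [map_sum, map_zero]
  have key := congrFun heq (-1, -1, (n : ℤ))
  simp only [pdS, pdT, applyOp, polyMulX] at key
  norm_num at key
  have hterm : ∀ i, (PowerSeries.coeff n)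
        ((p i : PowerSeries ℚ) * PowerSeries.derivativeFun^[i] (PowerSeries.mk fun n => c n n n))
      = ∑ k ∈ Finset.range ((p i).natDegree + 1),
          (p i).coeff k * pdX^[i] (Gof c) (-1, -1, (n : ℤ) - k) := by
    intro i
    rw [coeff_poly_mul, extc_iter_deriv, extc_diag]
    refine Finset.sum_congr rfl fun k _ => ?_
    rw [pdX_iter]
  rw [Finset.sum_congr rfl fun i _ => hterm i]
  exact key
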